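/- Let g be a positive integer, h > 0 a real number, t a real number, and A an n×n complex matrix. Let D¹ be the first-order central difference operator with periodic boundary conditions on ℂ^{ℤ/gℤ} and F the discrete Fourier transform matrix on ℂ^{ℤ/gℤ}. Then exp(t·(A ⊗ D¹)) = (I_n ⊗ F) · (Σ_{l∈ℤ/gℤ} exp((i·sin(2π·l/g)·t/h)·A) ⊗ E_{l,l}) · (I_n ⊗ F†), where E_{l,l} is the standard matrix unit. -/

import Mathlib

open scoped Matrix Kronecker

/-- The first-order central difference operator with periodic boundary conditions on
`ℂ^{ℤ/gℤ}` with grid spacing `h`:  `D¹ = (1/(2h))·Σ_p (E_{p-1,p} − E_{p,p-1})`. -/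
noncomputable def centralDiff1 (g : ℕ) [NeZero g] (h : ℝ) : Matrix (ZMod g) (ZMod g) ℂ :=
  ((1 / (2 * h) : ℝ) : ℂ) •
    ∑ p : ZMod g,
      (Matrix.single (p - 1) p (1 : ℂ) - Matrix.single p (p - 1) (1 : ℂ))

/-- The discrete Fourier transform matrix on `ℂ^{ℤ/gℤ}`:
`F_{p,l} = e^{2πi·p·l/g}/√g`, indices interpreted by their integer representatives. -/
noncomputable def dftMatrix (g : ℕ) [NeZero g] : Matrix (ZMod g) (ZMod g) ℂ :=
  Matrix.of fun p l : ZMod g =>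
    Complex.exp (2 * Real.pi * Complex.I * (p.val : ℂ) * (l.val : ℂ) / (g : ℂ)) /
      ((Real.sqrt g : ℝ) : ℂ)

set_option linter.unusedSectionVars false

noncomputable section DFTAux

def ch (g : ℕ) (k : ℤ) : ℂ := Complex.exp (2 * Real.pi * Complex.I * (k : ℂ) / (g : ℂ))

variable (g : ℕ) [NeZero g]

lemma dft_apply (p l : ZMod g) :
    dftMatrix g p l = ch g ((p.val : ℤ) * (l.val : ℤ)) / ((Real.sqrt g : ℝ) : ℂ) := by
  rw [dftMatrix, Matrix.of_apply, ch]
  congr 2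
  push_cast
  ring

lemma centralDiff1_apply (h : ℝ) (x y : ZMod g) :
    centralDiff1 g h x y =
      ((1 / (2 * h) : ℝ) : ℂ) *
        ((if y = x + 1 then 1 else 0) - (if y = x - 1 then 1 else 0)) := by
  simp only [centralDiff1, Matrix.smul_apply, Matrix.sum_apply, Matrix.sub_apply, smul_eq_mul]
  congr 1
  rw [Finset.sum_sub_distrib]
  congr 1
  · simp only [Matrix.single, Matrix.of_apply]
    rw [Finset.sum_eq_single_of_mem y (Finset.mem_univ y)]
    · simp only [and_true]
      by_cases hxy : y - 1 = x
      · simp [hxy, eq_comm, sub_eq_iff_eq_add.mp hxy]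
      · have : ¬ y = x + 1 := fun hc => hxy (by rw [hc]; ring)
        simp [hxy, this]
    · intro p _ hp
      simp [hp]
  · simp only [Matrix.single, Matrix.of_apply]
    rw [Finset.sum_eq_single_of_mem x (Finset.mem_univ x)]
    · simp only [true_and]
      by_cases hxy : x - 1 = y
      · simp only [hxy, if_pos rfl, if_pos hxy.symm]
      · have : ¬ y = x - 1 := fun hc => hxy hc.symm
        simp [hxy, this]
    · intro p _ hp
      simp [hp]

lemma hg0 : (g : ℂ) ≠ 0 := Nat.cast_ne_zero.mpr (NeZero.ne g)

lemma ch_add (a b : ℤ) : ch g (a + b) = ch g a * ch g b := by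
  rw [ch, ch, ch, ← Complex.exp_add]
  congr 1
  push_cast
  ring

lemma ch_eq_one_iff (k : ℤ) : ch g k = 1 ↔ (g : ℤ) ∣ k := by
  rw [ch, Complex.exp_eq_one_iff]
  have hgc : (g : ℂ) ≠ 0 := hg0 g
  have hπ : (Real.pi : ℂ) ≠ 0 := Complex.ofReal_ne_zero.mpr Real.pi_ne_zero
  constructor
  · rintro ⟨m, hm⟩
    refine ⟨m, ?_⟩
    have h2 : (2:ℂ) * Real.pi * Complex.I ≠ 0 := by
      simp [Complex.I_ne_zero, hπ, Real.pi_ne_zero]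
    have hc : (k : ℂ) = (g : ℂ) * m := by
      field_simp at hm
      apply mul_left_cancel₀ h2
      rw [hm]
    exact_mod_cast hc
  · rintro ⟨m, rfl⟩
    refine ⟨m, ?_⟩
    push_cast
    field_simp


lemma ch_congr {a b : ℤ} (hab : ((a : ZMod g)) = (b : ZMod g)) : ch g a = ch g b := by
  have hd : (g : ℤ) ∣ (a - b) := by
    rw [← ZMod.intCast_zmod_eq_zero_iff_dvd]
    push_cast
    rw [hab, sub_self]
  have h1 : ch g (a - b) = 1 := (ch_eq_one_iff g _).mpr hd
  calc ch g a = ch g (b + (a - b)) := by ring_nf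
    _ = ch g b * ch g (a - b) := ch_add g _ _
    _ = ch g b := by rw [h1, mul_one]

lemma ch_mul_nat (k : ℤ) (j : ℕ) : ch g (k * j) = ch g k ^ j := by
  induction j with
  | zero => simp [ch]
  | succ m ih =>
      have : k * ((m : ℤ) + 1) = k * m + k := by ring
      rw [Nat.cast_succ, this, ch_add, ih, pow_succ]

lemma sum_val_fun (f : ℕ → ℂ) : ∑ p : ZMod g, f p.val = ∑ i ∈ Finset.range g, f i := by
  refine Finset.sum_nbij' (i := fun p => p.val) (j := fun i => (i : ZMod g)) ?_ ?_ ?_ ?_ ?_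
  · intro a _; exact Finset.mem_range.mpr (ZMod.val_lt a)
  · intro a _; exact Finset.mem_univ _
  · intro a _; exact ZMod.natCast_zmod_val a
  · intro a ha; exact ZMod.val_cast_of_lt (Finset.mem_range.mp ha)
  · intro a _; rfl

lemma sum_ch (k : ℤ) :
    ∑ p : ZMod g, ch g (k * p.val) = if (g : ℤ) ∣ k then (g : ℂ) else 0 := by
  split_ifs with hd
  · have : ∀ p : ZMod g, ch g (k * p.val) = 1 := fun p =>
      (ch_eq_one_iff g _).mpr (hd.mul_right _)
    rw [Finset.sum_congr rfl fun p _ => this p, Finset.sum_const, Finset.card_univ, ZMod.card,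
      nsmul_eq_mul, mul_one]
  · have hζ : ch g k ≠ 1 := fun h => hd ((ch_eq_one_iff g k).mp h)
    have hζg : ch g k ^ g = 1 := by
      rw [← ch_mul_nat]; exact (ch_eq_one_iff g _).mpr ⟨k, by ring⟩
    calc ∑ p : ZMod g, ch g (k * p.val) = ∑ i ∈ Finset.range g, ch g k ^ i := by
          rw [show (∑ p : ZMod g, ch g (k * p.val)) = ∑ p : ZMod g, ch g k ^ p.val from
            Finset.sum_congr rfl fun p _ => ch_mul_nat g k p.val]
          exact sum_val_fun g fun i => ch g k ^ i
      _ = (ch g k ^ g - 1) / (ch g k - 1) := geom_sum_eq hζ g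
      _ = 0 := by rw [hζg, sub_self, zero_div]

lemma ch_star (k : ℤ) : (starRingEnd ℂ) (ch g k) = ch g (-k) := by
  rw [ch, ch, ← Complex.exp_conj]
  congr 1
  simp [map_div₀, Complex.conj_I, map_ofNat]


end DFTAux

noncomputable section DFTAux2
variable (g : ℕ) [NeZero g]
open Complex

lemma dft_unitary : dftMatrix g * (dftMatrix g)ᴴ = 1 := by
  ext l m
  rw [Matrix.mul_apply]
  have hsq : ((Real.sqrt g : ℝ) : ℂ) * ((Real.sqrt g : ℝ) : ℂ) = (g : ℂ) := by
    rw [← Complex.ofReal_mul, Real.mul_self_sqrt (Nat.cast_nonneg g)]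
    push_cast
    rfl
  have key : ∀ p : ZMod g, dftMatrix g l p * (dftMatrix g)ᴴ p m
      = ch g (((l.val : ℤ) - (m.val : ℤ)) * (p.val : ℤ)) / (g : ℂ) := by
    intro p
    rw [Matrix.conjTranspose_apply, dft_apply, dft_apply]
    rw [star_div₀, show (star (ch g ((m.val : ℤ) * (p.val : ℤ)))) = ch g (-((m.val : ℤ) * (p.val : ℤ))) from ch_star g _,
      show star (((Real.sqrt g : ℝ) : ℂ)) = ((Real.sqrt g : ℝ) : ℂ) from Complex.conj_ofReal _]
    rw [div_mul_div_comm, hsq, ← ch_add]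
    congr 2
    ring
  rw [Finset.sum_congr rfl fun p _ => key p, ← Finset.sum_div, sum_ch]
  have hiff : ((g : ℤ) ∣ ((l.val : ℤ) - (m.val : ℤ))) ↔ l = m := by
    rw [← ZMod.intCast_zmod_eq_zero_iff_dvd]
    push_cast
    rw [ZMod.natCast_zmod_val, ZMod.natCast_zmod_val, sub_eq_zero]
  by_cases hlm : l = m
  · rw [if_pos (hiff.mpr hlm), div_self (hg0 g), hlm, Matrix.one_apply_eq]
  · rw [if_neg (fun hd => hlm (hiff.mp hd)), zero_div, Matrix.one_apply_ne hlm]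

lemma dft_unitary' : (dftMatrix g)ᴴ * dftMatrix g = 1 :=
  mul_eq_one_comm.mp (dft_unitary g)

lemma dft_shift_up (x l : ZMod g) :
    dftMatrix g (x + 1) l = dftMatrix g x l * ch g (l.val : ℤ) := by
  rw [dft_apply, dft_apply]
  have : ch g ((((x + 1 : ZMod g)).val : ℤ) * (l.val : ℤ))
      = ch g ((x.val : ℤ) * (l.val : ℤ) + (l.val : ℤ)) := by
    apply ch_congr
    push_cast
    rw [ZMod.natCast_zmod_val, ZMod.natCast_zmod_val, ZMod.natCast_zmod_val]
    ring
  rw [this, ch_add]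
  ring

lemma dft_shift_down (x l : ZMod g) :
    dftMatrix g (x - 1) l = dftMatrix g x l * ch g (-(l.val : ℤ)) := by
  rw [dft_apply, dft_apply]
  have : ch g ((((x - 1 : ZMod g)).val : ℤ) * (l.val : ℤ))
      = ch g ((x.val : ℤ) * (l.val : ℤ) + (-(l.val : ℤ))) := by
    apply ch_congr
    push_cast
    rw [ZMod.natCast_zmod_val, ZMod.natCast_zmod_val, ZMod.natCast_zmod_val]
    ring
  rw [this, ch_add]
  ring

lemma ch_sub_ch (l : ZMod g) :
    ch g (l.val : ℤ) - ch g (-(l.val : ℤ))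
      = 2 * Complex.I * ((Real.sin (2 * Real.pi * (l.val : ℝ) / g) : ℝ) : ℂ) := by
  have h1 : ch g (l.val : ℤ)
      = Complex.exp (((2 * Real.pi * (l.val : ℝ) / g : ℝ) : ℂ) * Complex.I) := by
    rw [ch]; congr 1; push_cast; ring
  have h2 : ch g (-(l.val : ℤ))
      = Complex.exp (((-(2 * Real.pi * (l.val : ℝ) / g) : ℝ) : ℂ) * Complex.I) := by
    rw [ch]; congr 1; push_cast; ring
  rw [h1, h2, Complex.exp_mul_I, Complex.exp_mul_I, ← Complex.ofReal_cos, ← Complex.ofReal_sin,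
    ← Complex.ofReal_cos, ← Complex.ofReal_sin, Real.cos_neg, Real.sin_neg]
  push_cast
  ring

end DFTAux2

noncomputable section Diag
variable (g : ℕ) [NeZero g]

lemma centralDiff1_mul_dft (h : ℝ) (hh : h ≠ 0) :
    centralDiff1 g h * dftMatrix g =
      dftMatrix g * Matrix.diagonal (fun l : ZMod g =>
        Complex.I * ((Real.sin (2 * Real.pi * (l.val : ℝ) / g) : ℝ) : ℂ) / (h : ℂ)) := by
  ext x l
  rw [Matrix.mul_apply, Matrix.mul_diagonal]
  have hterm : ∀ y, centralDiff1 g h x y * dftMatrix g y l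
      = ((1 / (2 * h) : ℝ) : ℂ) *
          ((if y = x + 1 then dftMatrix g y l else 0) -
            (if y = x - 1 then dftMatrix g y l else 0)) := by
    intro y
    rw [centralDiff1_apply]
    split_ifs <;> ring
  rw [Finset.sum_congr rfl fun y _ => hterm y, ← Finset.mul_sum, Finset.sum_sub_distrib,
    Finset.sum_ite_eq' Finset.univ (x + 1) (fun y => dftMatrix g y l),
    Finset.sum_ite_eq' Finset.univ (x - 1) (fun y => dftMatrix g y l)]
  simp only [Finset.mem_univ, if_true]
  rw [dft_shift_up, dft_shift_down, ← mul_sub, ch_sub_ch]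
  have hhc : (h : ℂ) ≠ 0 := Complex.ofReal_ne_zero.mpr hh
  push_cast
  field_simp

lemma blockDiagonal_eq_sum_kron {n : ℕ} (v : ZMod g → Matrix (Fin n) (Fin n) ℂ) :
    Matrix.blockDiagonal v = ∑ l : ZMod g, v l ⊗ₖ Matrix.single l l (1 : ℂ) := by
  ext ⟨i, p⟩ ⟨j, q⟩
  rw [Matrix.blockDiagonal_apply, Matrix.sum_apply]
  simp only [Matrix.kroneckerMap_apply, Matrix.single, Matrix.of_apply]
  rw [Finset.sum_eq_single_of_mem p (Finset.mem_univ p)]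
  · by_cases hpq : p = q <;> simp [hpq]
  · intro b _ hb
    simp [hb]

end Diag


set_option maxHeartbeats 1000000 in
/-- **Exponential of one electronic-Liouvillian term**:
`exp(t·(A ⊗ D¹)) = (I ⊗ F)·(Σ_l exp((i·sin(2πl/g)·t/h)·A) ⊗ E_{l,l})·(I ⊗ F†)`. -/
theorem exp_kronecker_centralDiff1 (g : ℕ) [NeZero g] (h t : ℝ) (hh : 0 < h) (n : ℕ)
    (A : Matrix (Fin n) (Fin n) ℂ) :
    NormedSpace.exp ((t : ℂ) • (A ⊗ₖ centralDiff1 g h)) =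
      ((1 : Matrix (Fin n) (Fin n) ℂ) ⊗ₖ dftMatrix g) *
        (∑ l : ZMod g,
          NormedSpace.exp
              ((Complex.I * ((Real.sin (2 * Real.pi * (l.val : ℝ) / g) : ℝ) : ℂ) * (t : ℂ) /
                  (h : ℂ)) • A) ⊗ₖ
            Matrix.single l l (1 : ℂ)) *
        ((1 : Matrix (Fin n) (Fin n) ℂ) ⊗ₖ (dftMatrix g)ᴴ) := by
  classical
  have hh0 : h ≠ 0 := ne_of_gt hh
  set F := dftMatrix g with hF
  set μ : ZMod g → ℂ :=
    fun l => Complex.I * ((Real.sin (2 * Real.pi * (l.val : ℝ) / g) : ℝ) : ℂ) / (h : ℂ) with hμ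
  have h1 : F * Fᴴ = 1 := dft_unitary g
  have h2 : Fᴴ * F = 1 := dft_unitary' g
  have hdiag : centralDiff1 g h = F * Matrix.diagonal μ * Fᴴ := by
    calc centralDiff1 g h = centralDiff1 g h * (F * Fᴴ) := by rw [h1, mul_one]
      _ = (centralDiff1 g h * F) * Fᴴ := by rw [mul_assoc]
      _ = F * Matrix.diagonal μ * Fᴴ := by rw [centralDiff1_mul_dft g h hh0]
  have hU1 : ((1 : Matrix (Fin n) (Fin n) ℂ) ⊗ₖ F) * ((1 : Matrix (Fin n) (Fin n) ℂ) ⊗ₖ Fᴴ)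
      = 1 := by
    rw [← Matrix.mul_kronecker_mul, one_mul, h1, Matrix.one_kronecker_one]
  have hU2 : ((1 : Matrix (Fin n) (Fin n) ℂ) ⊗ₖ Fᴴ) * ((1 : Matrix (Fin n) (Fin n) ℂ) ⊗ₖ F)
      = 1 := by
    rw [← Matrix.mul_kronecker_mul, one_mul, h2, Matrix.one_kronecker_one]
  set U : (Matrix (Fin n × ZMod g) (Fin n × ZMod g) ℂ)ˣ :=
    ⟨(1 : Matrix (Fin n) (Fin n) ℂ) ⊗ₖ F, (1 : Matrix (Fin n) (Fin n) ℂ) ⊗ₖ Fᴴ, hU1, hU2⟩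
    with hUdef
  have hUc : (U : Matrix (Fin n × ZMod g) (Fin n × ZMod g) ℂ)
      = (1 : Matrix (Fin n) (Fin n) ℂ) ⊗ₖ F := rfl
  have hUinv : ((U⁻¹ : (Matrix (Fin n × ZMod g) (Fin n × ZMod g) ℂ)ˣ)
      : Matrix (Fin n × ZMod g) (Fin n × ZMod g) ℂ)
      = (1 : Matrix (Fin n) (Fin n) ℂ) ⊗ₖ Fᴴ := rfl
  have hmid : (t : ℂ) • (A ⊗ₖ centralDiff1 g h)
      = (U : Matrix (Fin n × ZMod g) (Fin n × ZMod g) ℂ) *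
        Matrix.blockDiagonal (fun l => ((t : ℂ) * μ l) • A) *
        ((U⁻¹ : (Matrix (Fin n × ZMod g) (Fin n × ZMod g) ℂ)ˣ) :
          Matrix (Fin n × ZMod g) (Fin n × ZMod g) ℂ) := by
    rw [hdiag]
    have hconj : A ⊗ₖ (F * Matrix.diagonal μ * Fᴴ)
        = (U : Matrix (Fin n × ZMod g) (Fin n × ZMod g) ℂ) * (A ⊗ₖ Matrix.diagonal μ) *
          ((U⁻¹ : (Matrix (Fin n × ZMod g) (Fin n × ZMod g) ℂ)ˣ) :
            Matrix (Fin n × ZMod g) (Fin n × ZMod g) ℂ) := by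
      rw [hUc, hUinv, ← Matrix.mul_kronecker_mul, ← Matrix.mul_kronecker_mul]
      simp only [one_mul, mul_one]
    rw [hconj, ← smul_mul_assoc, ← mul_smul_comm]
    congr 2
    have harg : ((t : ℂ) • fun l : ZMod g => MulOpposite.op (μ l) • A)
        = fun l : ZMod g => ((t : ℂ) * μ l) • A := by
      funext l
      rw [Pi.smul_apply, op_smul_eq_smul, smul_smul]
    rw [Matrix.kronecker_diagonal, ← Matrix.blockDiagonal_smul, harg]
  rw [hmid, Matrix.exp_units_conj U, Matrix.exp_blockDiagonal]
  have hexp : NormedSpace.exp (fun l : ZMod g => ((t : ℂ) * μ l) • A)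
      = fun l : ZMod g => NormedSpace.exp (((t : ℂ) * μ l) • A) := by
    letI : SeminormedRing (Matrix (Fin n) (Fin n) ℂ) := Matrix.linftyOpSemiNormedRing
    letI : NormedRing (Matrix (Fin n) (Fin n) ℂ) := Matrix.linftyOpNormedRing
    letI : NormedAlgebra ℂ (Matrix (Fin n) (Fin n) ℂ) := Matrix.linftyOpNormedAlgebra
    letI : NormedAlgebra ℚ (Matrix (Fin n) (Fin n) ℂ) := NormedAlgebra.restrictScalars ℚ ℂ _
    exact Pi.exp_def _
  rw [hexp, blockDiagonal_eq_sum_kron, hUc, hUinv]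
  congr 1
  congr 1
  refine Finset.sum_congr rfl fun l _ => ?_
  have hsc : ((t : ℂ) * (Complex.I * ((Real.sin (2 * Real.pi * (l.val : ℝ) / g) : ℝ) : ℂ) / (h : ℂ)))
      = Complex.I * ((Real.sin (2 * Real.pi * (l.val : ℝ) / g) : ℝ) : ℂ) * (t : ℂ) / (h : ℂ) := by
    ring
  rw [show μ l = Complex.I * ((Real.sin (2 * Real.pi * (l.val : ℝ) / g) : ℝ) : ℂ) / (h : ℂ) from rfl,
    hsc]
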